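/- Let κ and λ be infinite cardinals, let S be a ⟨∨,0⟩-semilattice, let (a_ξ)_{ξ<κ} be an increasing family in S with a_0 = 0 and let (b_η)_{η<λ} be a decreasing family in S with a_ξ ≤ b_η for all ξ < κ and η < λ, and let μ(x,y) = σ(x \ y) for x, y ∈ P_{κ,λ}. Suppose there exist a lattice L, a homomorphism of partial lattices f : P_{κ,λ} → L, and an S-valued measure ν on L such that μ(x,y) = ν(f(x), f(y)) for all x, y ∈ P_{κ,λ}. Then there exists c ∈ S such that a_ξ ≤ c ≤ b_η for all ξ < κ and η < λ. -/

import Mathlib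

open Set Cardinal

/-- Membership in the Boolean subalgebra of the powerset of `P` generated by the
lower subsets of `P`: the smallest family of subsets of `P` containing all lower
sets and closed under complementation and (binary) union (hence also under binary
intersection, and containing `∅` and `P`). -/
inductive IntMem (P : Type*) [Preorder P] : Set P → Prop
  | lower (s : Set P) : IsLowerSet s → IntMem P s
  | compl (s : Set P) : IntMem P s → IntMem P sᶜ
  | union (s t : Set P) : IntMem P s → IntMem P t → IntMem P (s ∪ t)

/-- `Int P`: the Boolean subalgebra of the powerset of `P` generated by the lower subsets
of `P`, viewed as a set of subsets of `P`. -/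
def IntP (P : Type*) [Preorder P] : Set (Set P) := {s | IntMem P s}

open Classical in
/-- `χ_o` : sends a subset of `{β | β < o}` to `false` if it is bounded (contained in some
`α < o`) and to `true` otherwise. -/
noncomputable def chiO (o : Ordinal) (x : Set ↥(Set.Iio o)) : Bool :=
  if ∃ α < o, ∀ β ∈ x, (β : Ordinal) < α then false else true

/-- The ambient Boolean algebra `(Set κ) × (Set λ) × (Set λ)` in which
`A_{κ,λ} = Int κ × Int λ × Int λ` lives. -/
abbrev Amb (κ lam : Cardinal) : Type _ :=
  Set ↥(Set.Iio κ.ord) × Set ↥(Set.Iio lam.ord) × Set ↥(Set.Iio lam.ord)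

/-- `A_{κ,λ} = Int κ × Int λ × Int λ`. -/
def ASet (κ lam : Cardinal) : Set (Amb κ lam) :=
  {p | p.1 ∈ IntP ↥(Set.Iio κ.ord) ∧ p.2.1 ∈ IntP ↥(Set.Iio lam.ord) ∧
       p.2.2 ∈ IntP ↥(Set.Iio lam.ord)}

/-- `U_{κ,λ} = {⟨x0,x1,x2⟩ ∈ A_{κ,λ} : χ_κ(x0) = χ_λ(x1) = χ_λ(x2)}`. -/
def USet (κ lam : Cardinal) : Set (Amb κ lam) :=
  {p ∈ ASet κ lam | chiO κ.ord p.1 = chiO lam.ord p.2.1 ∧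
    chiO lam.ord p.2.1 = chiO lam.ord p.2.2}

/-- `V_{κ,λ} = {⟨x0,x1,x2⟩ ∈ A_{κ,λ} : χ_κ(x0) = χ_λ(x1)}`. -/
def VSet (κ lam : Cardinal) : Set (Amb κ lam) :=
  {p ∈ ASet κ lam | chiO κ.ord p.1 = chiO lam.ord p.2.1}

/-- `P*_{κ,λ} = {⟨x0,x1,x2⟩ ∈ A_{κ,λ} : χ_κ(x0) = 0 or x1 ∪ x2 ≠ ∅}`. -/
def PstarSet (κ lam : Cardinal) : Set (Amb κ lam) :=
  {p ∈ ASet κ lam | chiO κ.ord p.1 = false ∨ p.2.1 ∪ p.2.2 ≠ ∅}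

/-- `P_{κ,λ} = {⟨x0,x1,x2⟩ ∈ A_{κ,λ} : χ_κ(x0) = χ_λ(x1) ∨ χ_λ(x2)}`. -/
def PkSet (κ lam : Cardinal) : Set (Amb κ lam) :=
  {p ∈ ASet κ lam | chiO κ.ord p.1 = chiO lam.ord p.2.1 ⊔ chiO lam.ord p.2.2}

open Classical in
/-- The map `σ = σ_{⃗a,⃗b} : P*_{κ,λ} → S` : `σ(⟨x0,x1,x2⟩) = a_{sup x0}` if
`x1 ∪ x2 = ∅` (in which case `x0` is bounded, so `sup x0 < κ`), and
`σ(⟨x0,x1,x2⟩) = b_{min (x1 ∪ x2)}` otherwise.  (Outside of `P*_{κ,λ}` the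
value of this function is irrelevant; junk value `⊥` is used when the
corresponding index is out of range.) -/
noncomputable def sigmaM (κ lam : Cardinal) {S : Type*} [SemilatticeSup S] [OrderBot S]
    (a : ↥(Set.Iio κ.ord) → S) (b : ↥(Set.Iio lam.ord) → S) (p : Amb κ lam) : S :=
  if p.2.1 ∪ p.2.2 = ∅ then
    if h : sSup (Subtype.val '' p.1) < κ.ord then a ⟨sSup (Subtype.val '' p.1), h⟩ else ⊥
  else
    if h : sInf (Subtype.val '' (p.2.1 ∪ p.2.2)) < lam.ord then
      b ⟨sInf (Subtype.val '' (p.2.1 ∪ p.2.2)), h⟩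
    else ⊥

/-- The measure `μ = μ_{⃗a,⃗b}` on `P_{κ,λ}` : `μ(x, y) = σ(x \ y)`. -/
noncomputable def muM (κ lam : Cardinal) {S : Type*} [SemilatticeSup S] [OrderBot S]
    (a : ↥(Set.Iio κ.ord) → S) (b : ↥(Set.Iio lam.ord) → S) (p q : Amb κ lam) : S :=
  sigmaM κ lam a b (p \ q)

section AuxChi

variable {o : Ordinal}

lemma chiO_empty (h0 : 0 < o) : chiO o (∅ : Set ↥(Set.Iio o)) = false := by
  classical
  unfold chiO
  rw [if_pos ⟨0, h0, by simp⟩]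

lemma chiO_univ (_h0 : 0 < o) : chiO o (Set.univ : Set ↥(Set.Iio o)) = true := by
  classical
  unfold chiO
  rw [if_neg]
  rintro ⟨α, hα, hb⟩
  exact absurd (hb ⟨α, hα⟩ (Set.mem_univ _)) (lt_irrefl α)

lemma chiO_Iic (ho : Order.IsSuccLimit o) (ξ : ↥(Set.Iio o)) :
    chiO o {β : ↥(Set.Iio o) | (β : Ordinal) ≤ (ξ : Ordinal)} = false := by
  classical
  unfold chiO
  refine if_pos ⟨(ξ : Ordinal) + 1, ?_, ?_⟩
  · rw [Ordinal.add_one_eq_succ]; exact ho.succ_lt ξ.2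
  · intro β hβ
    rw [Ordinal.add_one_eq_succ, Order.lt_succ_iff]
    exact hβ

lemma chiO_tail (η : ↥(Set.Iio o)) :
    chiO o {β : ↥(Set.Iio o) | (η : Ordinal) ≤ (β : Ordinal)} = true := by
  classical
  unfold chiO
  rw [if_neg]
  rintro ⟨α, hα, hb⟩
  have hm : max α (η : Ordinal) < o := max_lt hα η.2
  have := hb ⟨max α (η : Ordinal), hm⟩ (by simp only [Set.mem_setOf_eq]; exact le_max_right _ _)
  exact absurd this (not_lt.2 (le_max_left _ _))

lemma sSup_image_Iic (ξ : ↥(Set.Iio o)) :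
    sSup (Subtype.val '' {β : ↥(Set.Iio o) | (β : Ordinal) ≤ (ξ : Ordinal)}) = (ξ : Ordinal) := by
  have : Subtype.val '' {β : ↥(Set.Iio o) | (β : Ordinal) ≤ (ξ : Ordinal)}
      = Set.Iic (ξ : Ordinal) := by
    ext x
    simp only [Set.mem_image, Set.mem_setOf_eq, Set.mem_Iic]
    constructor
    · rintro ⟨β, hβ, rfl⟩; exact hβ
    · intro hx; exact ⟨⟨x, Set.mem_Iio.2 (lt_of_le_of_lt hx ξ.2)⟩, hx, rfl⟩
  rw [this, csSup_Iic]

lemma sInf_image_tail (η : ↥(Set.Iio o)) :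
    sInf (Subtype.val '' {β : ↥(Set.Iio o) | (η : Ordinal) ≤ (β : Ordinal)}) = (η : Ordinal) := by
  apply le_antisymm
  · exact csInf_le (OrderBot.bddBelow _) ⟨η, by simp only [Set.mem_setOf_eq]; exact le_refl _, rfl⟩
  · refine le_csInf ⟨(η : Ordinal), ⟨η, ?_, rfl⟩⟩ ?_
    · simp only [Set.mem_setOf_eq]; exact le_refl _
    · rintro x ⟨β, hβ, rfl⟩; exact hβ

end AuxChi

/-- Under the same hypotheses as Statement 8, if the measure
`μ(x,y) = σ(x \ y)` on `P_{κ,λ}` factors through a lattice — i.e. there are a lattice `L`,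
a homomorphism of partial lattices `f : P_{κ,λ} → L` and an `S`-valued measure `ν` on `L`
with `μ(x,y) = ν(f x, f y)` on `P_{κ,λ}` — then there exists `c ∈ S` with
`a_ξ ≤ c ≤ b_η` for all `ξ < κ` and `η < λ`. -/
theorem interpolation_of_mu_factors.{u} (κ lam : Cardinal) (hκ : ℵ₀ ≤ κ) (hlam : ℵ₀ ≤ lam)
    {S : Type*} [SemilatticeSup S] [OrderBot S]
    (a : ↥(Set.Iio κ.ord) → S) (b : ↥(Set.Iio lam.ord) → S)
    (ha : Monotone a) (hb : Antitone b)
    (ha0 : ∀ ξ : ↥(Set.Iio κ.ord), (ξ : Ordinal) = 0 → a ξ = ⊥)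
    (hab : ∀ ξ η, a ξ ≤ b η)
    (L : Type u) [Lattice L] (f : Amb κ lam → L)
    (hf_mono : ∀ x ∈ PkSet κ lam, ∀ y ∈ PkSet κ lam, x ≤ y → f x ≤ f y)
    (hf_sup : ∀ X : Finset (Amb κ lam), ∀ hX : X.Nonempty, ↑X ⊆ PkSet κ lam →
      X.sup id ∈ PkSet κ lam → f (X.sup id) = X.sup' hX f)
    (hf_inf : ∀ Y : Finset (Amb κ lam), ∀ hY : Y.Nonempty, ↑Y ⊆ PkSet κ lam →
      Y.inf id ∈ PkSet κ lam → f (Y.inf id) = Y.inf' hY f)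
    (ν : L → L → S)
    (hν_le : ∀ x y : L, x ≤ y → ν x y = ⊥)
    (hν_tri : ∀ x y z : L, ν x z ≤ ν x y ⊔ ν y z)
    (hν_sup : ∀ x y z : L, ν (x ⊔ y) z = ν x z ⊔ ν y z)
    (hν_inf : ∀ x y z : L, ν x (y ⊓ z) = ν x y ⊔ ν x z)
    (hfac : ∀ x ∈ PkSet κ lam, ∀ y ∈ PkSet κ lam, muM κ lam a b x y = ν (f x) (f y)) :
    ∃ c : S, (∀ ξ, a ξ ≤ c) ∧ ∀ η, c ≤ b η := by
  classical
  have hκl : Order.IsSuccLimit κ.ord := Cardinal.isSuccLimit_ord hκ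
  have hll : Order.IsSuccLimit lam.ord := Cardinal.isSuccLimit_ord hlam
  have hκ0 : (0 : Ordinal) < κ.ord := hκl.pos
  have hl0 : (0 : Ordinal) < lam.ord := hll.pos
  -- monotonicity of ν
  have hνm1 : ∀ x x' z : L, x ≤ x' → ν x z ≤ ν x' z := by
    intro x x' z h
    have : ν x' z = ν (x ⊔ x') z := by rw [sup_eq_right.2 h]
    rw [this, hν_sup]; exact le_sup_left
  -- elements of P
  set z : Amb κ lam := (∅, ∅, ∅) with hz
  have hzP : z ∈ PkSet κ lam := by
    refine ⟨⟨IntMem.lower _ (by intro p q _ h; exact h.elim),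
      IntMem.lower _ (by intro p q _ h; exact h.elim),
      IntMem.lower _ (by intro p q _ h; exact h.elim)⟩, ?_⟩
    simp only [hz, chiO_empty hκ0, chiO_empty hl0]
    rfl
  set y1 : Amb κ lam := (Set.univ, Set.univ, ∅) with hy1
  set y2 : Amb κ lam := (Set.univ, ∅, Set.univ) with hy2
  have hy1P : y1 ∈ PkSet κ lam := by
    refine ⟨⟨IntMem.lower _ (isLowerSet_univ), IntMem.lower _ (isLowerSet_univ),
      IntMem.lower _ (by intro p q _ h; exact h.elim)⟩, ?_⟩
    simp only [hy1, chiO_univ hκ0, chiO_univ hl0, chiO_empty hl0]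
    rfl
  have hy2P : y2 ∈ PkSet κ lam := by
    refine ⟨⟨IntMem.lower _ (isLowerSet_univ),
      IntMem.lower _ (by intro p q _ h; exact h.elim), IntMem.lower _ (isLowerSet_univ)⟩, ?_⟩
    simp only [hy2, chiO_univ hκ0, chiO_univ hl0, chiO_empty hl0]
    rfl
  -- tail sets
  have tail_mem : ∀ η : ↥(Set.Iio lam.ord),
      {β : ↥(Set.Iio lam.ord) | (η : Ordinal) ≤ (β : Ordinal)} ∈ IntP ↥(Set.Iio lam.ord) := by
    intro η
    have : {β : ↥(Set.Iio lam.ord) | (η : Ordinal) ≤ (β : Ordinal)}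
        = {β : ↥(Set.Iio lam.ord) | (β : Ordinal) < (η : Ordinal)}ᶜ := by
      ext β; simp [not_lt]
    rw [this]
    exact IntMem.compl _ (IntMem.lower _ (by
      intro p q hqp hp
      exact lt_of_le_of_lt hqp hp))
  set m : L := f y1 ⊓ f y2 with hm
  refine ⟨ν m (f z), ?_, ?_⟩
  · -- a ξ ≤ c
    intro ξ
    set xξ : Amb κ lam := ({β : ↥(Set.Iio κ.ord) | (β : Ordinal) ≤ (ξ : Ordinal)}, ∅, ∅)
      with hxξ
    have hxP : xξ ∈ PkSet κ lam := by
      refine ⟨⟨IntMem.lower _ (by intro p q hqp hp; exact le_trans hqp hp),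
        IntMem.lower _ (by intro p q _ h; exact h.elim),
        IntMem.lower _ (by intro p q _ h; exact h.elim)⟩, ?_⟩
      simp only [hxξ, chiO_Iic hκl, chiO_empty hl0]
      rfl
    have hmu : muM κ lam a b xξ z = a ξ := by
      have hsd : xξ \ z = xξ := by
        have : z = (⊥ : Amb κ lam) := rfl
        rw [this, sdiff_bot]
      rw [muM, hsd, sigmaM]
      rw [if_pos (by simp [hxξ])]
      simp only [hxξ]
      rw [dif_pos (by rw [sSup_image_Iic]; exact ξ.2)]
      congr 1
      exact Subtype.ext (sSup_image_Iic ξ)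
    have hle : f xξ ≤ m := by
      refine le_inf ?_ ?_
      · exact hf_mono _ hxP _ hy1P ⟨by simp [hxξ, hy1], by simp [hxξ, hy1], le_refl _⟩
      · exact hf_mono _ hxP _ hy2P ⟨by simp [hxξ, hy2], le_refl _, by simp [hxξ, hy2]⟩
    calc a ξ = muM κ lam a b xξ z := hmu.symm
      _ = ν (f xξ) (f z) := hfac _ hxP _ hzP
      _ ≤ ν m (f z) := hνm1 _ _ _ hle
  · -- c ≤ b η
    intro η
    set T : Set ↥(Set.Iio lam.ord) := {β : ↥(Set.Iio lam.ord) | (η : Ordinal) ≤ (β : Ordinal)}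
      with hT
    set w1 : Amb κ lam := (Set.univ, Set.univ, T) with hw1
    set w2 : Amb κ lam := (Set.univ, T, Set.univ) with hw2
    set w : Amb κ lam := (Set.univ, T, T) with hw
    have hTchi : chiO lam.ord T = true := chiO_tail η
    have hw1P : w1 ∈ PkSet κ lam := by
      refine ⟨⟨IntMem.lower _ (isLowerSet_univ), IntMem.lower _ (isLowerSet_univ),
        tail_mem η⟩, ?_⟩
      simp only [hw1, chiO_univ hκ0, chiO_univ hl0, hTchi]
      rfl
    have hw2P : w2 ∈ PkSet κ lam := by
      refine ⟨⟨IntMem.lower _ (isLowerSet_univ), tail_mem η,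
        IntMem.lower _ (isLowerSet_univ)⟩, ?_⟩
      simp only [hw2, chiO_univ hκ0, chiO_univ hl0, hTchi]
      rfl
    have hwP : w ∈ PkSet κ lam := by
      refine ⟨⟨IntMem.lower _ (isLowerSet_univ), tail_mem η, tail_mem η⟩, ?_⟩
      simp only [hw, chiO_univ hκ0, hTchi]
      rfl
    -- f w = f w1 ⊓ f w2
    have hw12 : w1 ⊓ w2 = w := by
      simp only [hw1, hw2, hw, Prod.inf_def]
      simp
    have hinfid : ({w1, w2} : Finset (Amb κ lam)).inf id = w := by
      simp only [Finset.inf_insert, Finset.inf_singleton, id_eq]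
      rw [hw12]
    have hfw : f w = f w1 ⊓ f w2 := by
      have hsub : ↑({w1, w2} : Finset (Amb κ lam)) ⊆ PkSet κ lam := by
        intro p hp
        simp only [Finset.coe_insert, Finset.coe_singleton, Set.mem_insert_iff,
          Set.mem_singleton_iff] at hp
        rcases hp with rfl | rfl
        · exact hw1P
        · exact hw2P
      have h1 := hf_inf {w1, w2} ⟨w1, by simp⟩ hsub (by rw [hinfid]; exact hwP)
      rw [hinfid] at h1
      rw [h1, Finset.inf'_insert, Finset.inf'_singleton]
      exact Finset.singleton_nonempty _
    -- μ(w, z) = b η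
    have hηT : η ∈ T := by simp only [hT, Set.mem_setOf_eq]; exact le_refl _
    have hmuw : muM κ lam a b w z = b η := by
      have hsd : w \ z = w := by
        have : z = (⊥ : Amb κ lam) := rfl
        rw [this, sdiff_bot]
      rw [muM, hsd, sigmaM]
      rw [if_neg (by
        simp only [hw, Set.union_self]
        exact fun h => (h ▸ hηT : η ∈ (∅ : Set _)))]
      simp only [hw, Set.union_self]
      rw [dif_pos (by rw [hT, sInf_image_tail]; exact η.2)]
      congr 1
      exact Subtype.ext (sInf_image_tail η)
    -- ν m (f w) = ⊥
    have h1 : ν m (f w1) = ⊥ :=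
      hν_le _ _ (le_trans inf_le_left
        (hf_mono _ hy1P _ hw1P ⟨le_refl _, le_refl _, by simp [hy1, hw1]⟩))
    have h2 : ν m (f w2) = ⊥ :=
      hν_le _ _ (le_trans inf_le_right
        (hf_mono _ hy2P _ hw2P ⟨le_refl _, by simp [hy2, hw2], le_refl _⟩))
    have hmw : ν m (f w) = ⊥ := by
      rw [hfw, hν_inf, h1, h2, bot_sup_eq]
    calc ν m (f z) ≤ ν m (f w) ⊔ ν (f w) (f z) := hν_tri _ _ _
      _ = ν (f w) (f z) := by rw [hmw, bot_sup_eq]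
      _ = b η := by rw [← hfac _ hwP _ hzP, hmuw]
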